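/- Every i-dimensional subcode D of the first order Reed–Muller code RM_q(1,m) (the image of the evaluation map V_q(1,m) → F_q^{q^m} on polynomials of degree ≤ 1) has support weight equal to q^m or q^m - q^{m-i}. Consequently every i-minimal subcode has support weight q^m - ⌊q^{m-i}⌋. -/

import Mathlib

open MvPolynomial in
private lemma aux_affine {F : Type*} [Field F] {m : ℕ} (f : MvPolynomial (Fin m) F)
    (hf : f.totalDegree ≤ 1) (a : Fin m → F) :
    MvPolynomial.eval a f
      = MvPolynomial.coeff 0 f + ∑ j : Fin m, MvPolynomial.coeff (Finsupp.single j 1) f * a j := by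
  classical
  have key : ∀ d ∈ f.support, d = 0 ∨ ∃ j, d = Finsupp.single j 1 := by
    intro d hd
    by_cases h0 : d = 0
    · exact Or.inl h0
    · right
      obtain ⟨j, hj⟩ : ∃ j, d j ≠ 0 := by
        by_contra h
        push_neg at h
        exact h0 (Finsupp.ext fun k => h k)
      have hsum : (d.sum fun _ e => e) ≤ 1 := le_trans (MvPolynomial.le_totalDegree hd) hf
      have hjmem : j ∈ d.support := Finsupp.mem_support_iff.mpr hj
      have hothers : ∀ k, k ≠ j → d k = 0 := by
        intro k hk
        by_contra hdk
        have hkmem : k ∈ d.support := Finsupp.mem_support_iff.mpr hdk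
        have hsub : ({j, k} : Finset (Fin m)) ⊆ d.support := by
          intro x hx
          simp only [Finset.mem_insert, Finset.mem_singleton] at hx
          rcases hx with rfl | rfl <;> assumption
        have hle : d j + d k ≤ d.sum fun _ e => e := by
          rw [Finsupp.sum, ← Finset.sum_pair (Ne.symm hk)]
          exact Finset.sum_le_sum_of_subset hsub
        have h1 : 1 ≤ d j := Nat.one_le_iff_ne_zero.mpr hj
        have h2 : 1 ≤ d k := Nat.one_le_iff_ne_zero.mpr hdk
        omega
      have hsupp : d.support = {j} := by
        apply Finset.ext
        intro k
        simp only [Finsupp.mem_support_iff, Finset.mem_singleton]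
        constructor
        · intro hk
          by_contra hkj
          exact hk (hothers k hkj)
        · rintro rfl; exact hj
      have hdj : d j = 1 := by
        have : (d.sum fun _ e => e) = d j := by
          rw [Finsupp.sum, hsupp, Finset.sum_singleton]
        omega
      refine ⟨j, Finsupp.ext fun k => ?_⟩
      rcases eq_or_ne k j with rfl | hk
      · simp [hdj]
      · simp [hothers k hk, Finsupp.single_apply, Ne.symm hk]
  rw [MvPolynomial.eval_eq]
  have hsub : f.support ⊆ insert 0 (Finset.image (fun j => Finsupp.single j 1) Finset.univ) := by
    intro d hd
    rcases key d hd with rfl | ⟨j, rfl⟩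
    · exact Finset.mem_insert_self _ _
    · exact Finset.mem_insert_of_mem (Finset.mem_image_of_mem _ (Finset.mem_univ j))
  rw [Finset.sum_subset hsub (by
    intro d _ hd
    rw [MvPolynomial.notMem_support_iff.mp hd, zero_mul])]
  have h0T : (0 : Fin m →₀ ℕ) ∉ Finset.image (fun j => Finsupp.single j 1) Finset.univ := by
    simp [eq_comm, Finsupp.single_eq_zero]
  rw [Finset.sum_insert h0T,
    Finset.sum_image (fun x _ y _ h => Finsupp.single_left_injective one_ne_zero h)]
  congr 1
  · simp
  · refine Finset.sum_congr rfl fun j _ => ?_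
    congr 1
    rw [Finsupp.support_single_ne_zero j one_ne_zero, Finset.prod_singleton,
      Finsupp.single_eq_same, pow_one]

/-- Every `i`-dimensional subcode `D` of the first order Reed–Muller code
`RM_q(1,m)` (image of the evaluation map on polynomials of degree ≤ 1, with coordinates
indexed by the points of `F_q^m`) has support weight `q^m` or `q^m - q^{m-i}`; and every
`i`-minimal subcode has support weight `q^m - ⌊q^{m-i}⌋`. -/
theorem stmt_10 {F : Type*} [Field F] [Fintype F] {m i : ℕ} (hi : 1 ≤ i)
    (C : Submodule F ((Fin m → F) → F))
    (hC : ∀ c, c ∈ C ↔ ∃ f : MvPolynomial (Fin m) F,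
      f.totalDegree ≤ 1 ∧ ∀ a : Fin m → F, MvPolynomial.eval a f = c a)
    (supp : Submodule F ((Fin m → F) → F) → Set (Fin m → F))
    (hsupp : ∀ D, supp D = {a : Fin m → F | ∃ c ∈ D, c a ≠ 0})
    (D : Submodule F ((Fin m → F) → F)) (hD : D ≤ C)
    (hdim : Module.finrank F D = i) :
    (((supp D).ncard : ℚ) = (Fintype.card F : ℚ) ^ m ∨
      ((supp D).ncard : ℚ) = (Fintype.card F : ℚ) ^ m -
        (Fintype.card F : ℚ) ^ ((m : ℤ) - (i : ℤ))) ∧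
    ((∀ D' : Submodule F ((Fin m → F) → F), D' ≤ C → Module.finrank F D' = i →
        supp D' ⊆ supp D → supp D' = supp D) →
      ((supp D).ncard : ℚ) = (Fintype.card F : ℚ) ^ m -
        (⌊(Fintype.card F : ℚ) ^ ((m : ℤ) - (i : ℤ))⌋ : ℚ)) := by
  classical
  have hq2 : 2 ≤ Fintype.card F := Fintype.one_lt_card
  set q := Fintype.card F with hq
  have hcardV : Nat.card (Fin m → F) = q ^ m := by
    rw [Nat.card_eq_fintype_card, Fintype.card_fun, Fintype.card_fin]
  -- affine representation
  have hAff : ∀ c ∈ C, ∃ L : (Fin m → F) →ₗ[F] F, ∀ a, c a = L a + c 0 := by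
    intro c hc
    obtain ⟨f, hf1, hf2⟩ := (hC c).mp hc
    refine ⟨∑ j : Fin m, MvPolynomial.coeff (Finsupp.single j 1) f • LinearMap.proj j, fun a => ?_⟩
    have h0 := hf2 0
    have ha := hf2 a
    rw [aux_affine f hf1] at ha h0
    simp only [Pi.zero_apply, mul_zero, Finset.sum_const_zero, add_zero] at h0
    rw [← ha, LinearMap.sum_apply]
    simp only [LinearMap.smul_apply, LinearMap.proj_apply, smul_eq_mul, ← h0]
    ring
  -- evaluation maps
  let ev : (Fin m → F) → (D →ₗ[F] F) := fun a => (LinearMap.proj a).comp D.subtype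
  let T : (Fin m → F) →ₗ[F] (D →ₗ[F] F) :=
    { toFun := fun a => ev a - ev 0
      map_add' := by
        intro x y
        ext c
        obtain ⟨L, hL⟩ := hAff c.1 (hD c.2)
        simp only [ev, LinearMap.sub_apply, LinearMap.add_apply, LinearMap.comp_apply,
          LinearMap.proj_apply, Submodule.subtype_apply]
        rw [hL (x + y), hL x, hL y, map_add]
        ring
      map_smul' := by
        intro t x
        ext c
        obtain ⟨L, hL⟩ := hAff c.1 (hD c.2)
        simp only [ev, LinearMap.sub_apply, LinearMap.smul_apply, LinearMap.comp_apply,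
          LinearMap.proj_apply, Submodule.subtype_apply, RingHom.id_apply]
        rw [hL (t • x), hL x, map_smul]
        simp only [smul_eq_mul]
        ring }
  have hT : ∀ (a : Fin m → F) (c : D),
      T a c = (c : (Fin m → F) → F) a - (c : (Fin m → F) → F) 0 := fun _ _ => rfl
  let S : D →ₗ[F] ((Fin m → F) →ₗ[F] F) := T.flip
  have hS : ∀ (c : D) (a : Fin m → F),
      S c a = (c : (Fin m → F) → F) a - (c : (Fin m → F) → F) 0 := fun _ _ => rfl
  have hVrank : Module.finrank F (Fin m → F) = m := Module.finrank_fin_fun F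
  have hrange_eq : Module.finrank F (LinearMap.range T)
      = Module.finrank F (LinearMap.range S) := by
    have hTS : T = S.dualMap.comp (Module.Dual.eval F (Fin m → F)) := rfl
    rw [hTS, LinearMap.range_comp_of_range_eq_top _ (Module.erange_coe F (Fin m → F)),
      LinearMap.finrank_range_dualMap_eq_finrank_range]
  -- kernel of S consists of constants
  have hkerS_const : ∀ c : D, S c = 0 →
      (c : (Fin m → F) → F) = (c : (Fin m → F) → F) 0 • (fun _ => (1 : F)) := by
    intro c hc
    funext a
    have := LinearMap.congr_fun hc a
    rw [hS] at this
    simp only [LinearMap.zero_apply] at this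
    simp only [Pi.smul_apply, smul_eq_mul, mul_one]
    exact sub_eq_zero.mp this
  -- kernel of S has dimension at most 1
  have hone : (fun _ : Fin m → F => (1 : F)) ≠ (0 : (Fin m → F) → F) := by
    intro h
    have := congrFun h 0
    simp at this
  have hkerS_le1 : Module.finrank F (LinearMap.ker S) ≤ 1 := by
    have hmap : Submodule.map D.subtype (LinearMap.ker S)
        ≤ Submodule.span F {fun _ : Fin m → F => (1 : F)} := by
      rintro _ ⟨c, hc, rfl⟩
      have hc' : S c = 0 := hc
      rw [Submodule.subtype_apply, hkerS_const c hc']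
      exact Submodule.smul_mem _ _ (Submodule.mem_span_singleton_self _)
    calc Module.finrank F (LinearMap.ker S)
        = Module.finrank F (Submodule.map D.subtype (LinearMap.ker S)) :=
          (Submodule.equivMapOfInjective _ D.injective_subtype _).finrank_eq
      _ ≤ Module.finrank F (Submodule.span F {fun _ : Fin m → F => (1 : F)}) :=
          Submodule.finrank_mono hmap
      _ = 1 := finrank_span_singleton hone
  by_cases h1 : (fun _ : Fin m → F => (1 : F)) ∈ D
  · -- D contains the constants
    have hsuppuniv : supp D = Set.univ := by
      rw [hsupp]
      ext a
      simp only [Set.mem_setOf_eq, Set.mem_univ, iff_true]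
      exact ⟨_, h1, one_ne_zero⟩
    have hncard : (supp D).ncard = q ^ m := by
      rw [hsuppuniv, Set.ncard_univ, hcardV]
    have hncardQ : ((supp D).ncard : ℚ) = (q : ℚ) ^ m := by rw [hncard]; push_cast; ring
    refine ⟨Or.inl hncardQ, fun hmin => ?_⟩
    -- bound i ≤ m + 1
    have hrangeS_le : Module.finrank F (LinearMap.range S) ≤ m := by
      calc Module.finrank F (LinearMap.range S)
          ≤ Module.finrank F ((Fin m → F) →ₗ[F] F) := Submodule.finrank_le _
        _ = m := by rw [Subspace.dual_finrank_eq, hVrank]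
    have him1 : i ≤ m + 1 := by
      have h2 := LinearMap.finrank_range_add_finrank_ker S
      rw [hdim] at h2
      omega
    -- i ≤ m is impossible under minimality
    have him : ¬ i ≤ m := by
      intro him
      set e : Fin i → ((Fin m → F) → F) := fun j a => a (Fin.castLE him j) with he
      have he_mem : ∀ j, e j ∈ C := by
        intro j
        rw [hC]
        exact ⟨MvPolynomial.X (Fin.castLE him j),
          le_of_eq (MvPolynomial.totalDegree_X _), fun a => MvPolynomial.eval_X _⟩
      have hli : LinearIndependent F e := by
        rw [Fintype.linearIndependent_iff]
        intro g hg j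
        have h3 := congrFun hg (Pi.single (Fin.castLE him j) 1)
        simp only [Finset.sum_apply, Pi.smul_apply, smul_eq_mul, Pi.zero_apply, he] at h3
        rw [Finset.sum_eq_single j] at h3
        · simpa using h3
        · intro k _ hk
          rw [Pi.single_eq_of_ne ((Fin.castLE_injective him).ne_iff.mpr hk), mul_zero]
        · intro hj; exact absurd (Finset.mem_univ j) hj
      set D' : Submodule F ((Fin m → F) → F) := Submodule.span F (Set.range e) with hD'
      have hD'C : D' ≤ C := Submodule.span_le.mpr (Set.range_subset_iff.mpr he_mem)
      have hD'dim : Module.finrank F D' = i := by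
        rw [hD', finrank_span_eq_card hli, Fintype.card_fin]
      have heq := hmin D' hD'C hD'dim (by rw [hsuppuniv]; exact Set.subset_univ _)
      have h0mem : (0 : Fin m → F) ∈ supp D' := by
        rw [heq, hsuppuniv]; trivial
      rw [hsupp] at h0mem
      obtain ⟨c, hc, hc0⟩ := h0mem
      have : D' ≤ LinearMap.ker (LinearMap.proj (0 : Fin m → F)
          : ((Fin m → F) → F) →ₗ[F] F) := by
        rw [hD', Submodule.span_le]
        rintro _ ⟨j, rfl⟩
        simp [e, LinearMap.mem_ker]
      exact hc0 (this hc)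
    have hieq : i = m + 1 := by omega
    have hz : (Fintype.card F : ℚ) ^ ((m : ℤ) - (i : ℤ)) = ((q : ℚ))⁻¹ := by
      rw [show (m : ℤ) - (i : ℤ) = -1 by omega, zpow_neg, zpow_one]
    have hfl : ⌊((q : ℚ))⁻¹⌋ = 0 := by
      rw [Int.floor_eq_zero_iff]
      constructor
      · positivity
      · rw [inv_lt_one_iff₀]
        right
        exact_mod_cast hq2
    rw [hncardQ, hz, hfl]
    push_cast
    ring
  · -- D contains no nonzero constants
    have hkerS_bot : LinearMap.ker S = ⊥ := by
      rw [eq_bot_iff]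
      intro c hc
      rw [Submodule.mem_bot]
      by_contra hc0
      have hconst := hkerS_const c (LinearMap.mem_ker.mp hc)
      have hc00 : (c : (Fin m → F) → F) 0 ≠ 0 := by
        intro h
        apply hc0
        apply Subtype.ext
        rw [hconst, h, zero_smul, Submodule.coe_zero]
      apply h1
      have hmem : ((c : (Fin m → F) → F) 0)⁻¹ • (c : (Fin m → F) → F) ∈ D :=
        D.smul_mem _ c.2
      have : ((c : (Fin m → F) → F) 0)⁻¹ • (c : (Fin m → F) → F)
          = (fun _ : Fin m → F => (1 : F)) := by
        funext a
        have ha := congrFun hconst a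
        simp only [Pi.smul_apply, smul_eq_mul, mul_one] at ha ⊢
        rw [ha, inv_mul_cancel₀ hc00]
      rwa [this] at hmem
    have hrankS : Module.finrank F (LinearMap.range S) = i := by
      have h2 := LinearMap.finrank_range_add_finrank_ker S
      rw [hkerS_bot, finrank_bot, hdim] at h2
      omega
    have him : i ≤ m := by
      have h6 : Module.finrank F (LinearMap.range S) ≤ m := by
        calc Module.finrank F (LinearMap.range S)
            ≤ Module.finrank F ((Fin m → F) →ₗ[F] F) := Submodule.finrank_le _
          _ = m := by rw [Subspace.dual_finrank_eq, hVrank]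
      omega
    have hrankT : Module.finrank F (LinearMap.range T) = i := hrange_eq.trans hrankS
    have hTtop : LinearMap.range T = ⊤ := by
      apply Submodule.eq_top_of_finrank_eq
      rw [hrankT, Subspace.dual_finrank_eq (V := D), hdim]
    obtain ⟨a₀, ha₀⟩ : ∃ a₀, T a₀ = -(ev 0) := by
      have : -(ev 0) ∈ LinearMap.range T := hTtop ▸ Submodule.mem_top
      exact this
    have ha₀' : ∀ c : D, (c : (Fin m → F) → F) a₀ = 0 := by
      intro c
      have h3 := LinearMap.congr_fun ha₀ c
      rw [hT] at h3
      simp only [LinearMap.neg_apply, ev, LinearMap.comp_apply, LinearMap.proj_apply,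
        Submodule.subtype_apply] at h3
      linear_combination h3
    set Z : Set (Fin m → F) := {a : Fin m → F | ∀ c ∈ D, c a = 0} with hZdef
    have hZ : Z = (fun v => a₀ + v) '' ((LinearMap.ker T : Submodule F (Fin m → F)) : Set (Fin m → F)) := by
      ext a
      constructor
      · intro ha
        refine ⟨a - a₀, ?_, by funext k; simp⟩
        rw [SetLike.mem_coe, LinearMap.mem_ker, map_sub]
        ext c
        rw [LinearMap.sub_apply, hT, hT]
        have h4 : (c : (Fin m → F) → F) a = 0 := ha _ c.2
        rw [h4, ha₀' c]
        simp
      · rintro ⟨v, hv, rfl⟩ c hc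
        rw [SetLike.mem_coe, LinearMap.mem_ker] at hv
        have h5 : T (a₀ + v) ⟨c, hc⟩ = T a₀ ⟨c, hc⟩ := by
          rw [map_add, hv]
          simp
        rw [hT, hT] at h5
        have := ha₀' ⟨c, hc⟩
        simp only at this
        -- h5 : c (a₀ + v) - c 0 = c a₀ - c 0
        linear_combination h5 + this
    have hker_rank : Module.finrank F (LinearMap.ker T) = m - i := by
      have h2 := LinearMap.finrank_range_add_finrank_ker T
      rw [hrankT, hVrank] at h2
      omega
    have hZcard : Z.ncard = q ^ (m - i) := by
      haveI : Fintype (LinearMap.ker T) := Fintype.ofFinite _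
      rw [hZ, Set.ncard_image_of_injective _ (add_right_injective a₀),
        ← Nat.card_coe_set_eq]
      rw [SetLike.coe_sort_coe, Nat.card_eq_fintype_card,
        Module.card_eq_pow_finrank (K := F), hker_rank]
    have hZcompl : supp D = Zᶜ := by
      rw [hsupp]
      ext a
      simp only [Set.mem_setOf_eq, Set.mem_compl_iff, hZdef]
      push_neg
      rfl
    have hsuppcard : (supp D).ncard = q ^ m - q ^ (m - i) := by
      have hc := Set.ncard_add_ncard_compl Z
      rw [hcardV] at hc
      rw [hZcompl]
      omega
    have hle : q ^ (m - i) ≤ q ^ m := Nat.pow_le_pow_right (by omega) (by omega)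
    have hzp : (Fintype.card F : ℚ) ^ ((m : ℤ) - (i : ℤ)) = (q : ℚ) ^ (m - i) := by
      rw [show (m : ℤ) - (i : ℤ) = ((m - i : ℕ) : ℤ) by omega, zpow_natCast]
    have hcast : ((supp D).ncard : ℚ) = (q : ℚ) ^ m - (q : ℚ) ^ (m - i) := by
      rw [hsuppcard, Nat.cast_sub hle]
      push_cast
      ring
    constructor
    · right
      rw [hcast, hzp]
    · intro _
      rw [hcast, hzp, ← Nat.cast_pow, ← Nat.cast_pow, Int.floor_natCast]
      push_cast
      ring
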